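/- Over an algebraically closed field k of characteristic ≠ 2, 3, let E: y^2 = x^3 + 1 with Aut(E) ≅ μ6 generated by φ: (x,y) ↦ (η^2 x, η^3 y). Among the four cyclic order-3 subgroups of E[3], exactly one — namely G = {O, (0,1), (0,−1)} — is preserved by all of Aut(E); the stabilizer in Aut(E) of each of the other three order-3 subgroups is {±1} ≅ μ2. -/
import Mathlib


/-- Over an algebraically closed field `k` of characteristic `≠ 2, 3`, consider
`E : y² = x³ + 1` with `Aut(E) ≅ μ₆` acting by `φᵤ : (x,y) ↦ (u²x, u³y)` for `u⁶ = 1`.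
The four cyclic order-3 subgroups of `E[3]` have affine point sets `{(0,±1)}` and
`{(ζʲc, ±s)}`, `j = 0,1,2`, where `ζ` is a primitive cube root of unity, `c³ = -4`,
`s² = -3`.  Exactly one of them, `G = {O, (0,1), (0,-1)}`, is preserved by all of
`Aut(E)`; the stabilizer of each of the other three is exactly `{±1} ≅ μ₂`. -/
theorem stabilizers_of_order_three_subgroups {k : Type*} [Field k] [IsAlgClosed k]
    (h2 : (2 : k) ≠ 0) (h3 : (3 : k) ≠ 0)
    (ζ c s : k) (hζ : IsPrimitiveRoot ζ 3) (hc : c ^ 3 = -4) (hs : s ^ 2 = -3) :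
    ∀ u : k, u ^ 6 = 1 →
      ((fun p : k × k => (u ^ 2 * p.1, u ^ 3 * p.2)) '' {((0 : k), (1 : k)), (0, -1)}
          = {((0 : k), (1 : k)), (0, -1)}) ∧
      (∀ j : Fin 3,
        ((fun p : k × k => (u ^ 2 * p.1, u ^ 3 * p.2)) ''
            {(ζ ^ (j : ℕ) * c, s), (ζ ^ (j : ℕ) * c, -s)}
          = {(ζ ^ (j : ℕ) * c, s), (ζ ^ (j : ℕ) * c, -s)} ↔ u = 1 ∨ u = -1)) := by
  intro u hu
  have hc0 : c ≠ 0 := by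
    intro h; rw [h] at hc
    have h4 : (2 : k) * 2 = 0 := by linear_combination hc
    rcases mul_eq_zero.mp h4 with h' | h' <;> exact h2 h'
  have hζ0 : ζ ≠ 0 := hζ.ne_zero (by norm_num)
  have hu3 : u ^ 3 = 1 ∨ u ^ 3 = -1 := by
    have h : (u ^ 3 - 1) * (u ^ 3 + 1) = 0 := by linear_combination hu
    rcases mul_eq_zero.mp h with h | h
    · left; exact sub_eq_zero.mp h
    · right; exact eq_neg_of_add_eq_zero_left h
  constructor
  · rcases hu3 with h | h
    · simp [Set.image_insert_eq, h]
    · simp [Set.image_insert_eq, h, Set.pair_comm]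
  · intro j
    set a := ζ ^ (j : ℕ) * c with ha
    have ha0 : a ≠ 0 := mul_ne_zero (pow_ne_zero _ hζ0) hc0
    constructor
    · intro h
      have hmem : (u ^ 2 * a, u ^ 3 * s) ∈ ({(a, s), (a, -s)} : Set (k × k)) := by
        rw [← h]; exact ⟨(a, s), by simp, rfl⟩
      have hx : u ^ 2 * a = a := by
        rcases hmem with h' | h' <;> exact (Prod.ext_iff.mp h').1
      have hu2 : u ^ 2 = 1 := mul_right_cancel₀ ha0 (by rw [one_mul, hx])
      have h' : (u - 1) * (u + 1) = 0 := by linear_combination hu2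
      rcases mul_eq_zero.mp h' with h'' | h''
      · left; exact sub_eq_zero.mp h''
      · right; exact eq_neg_of_add_eq_zero_left h''
    · rintro (rfl | rfl)
      · simp [Set.image_insert_eq]
      · norm_num [Set.image_insert_eq, Set.pair_comm]
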